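/- arXiv:2305.07566 — 2 statements merged into one kernel-verified Lean document; each statement's English description precedes it below -/
import Mathlib

section
/- Fix λ ∈ ℝ and R > 0 (with R < π/(2√λ) if λ > 0). Suppose (B_n) is a sequence of angles with B_n → π as n → ∞ and 0 < B_n < π, and define ℓ_n by ta_λ(ℓ_n/2) = ta_λ(R)·cos(B_n/2). Then the sequence κ_n = (π - B_n)/(2·ta_λ(ℓ_n/2)) converges to co_λ(R) = c_λ(R)/s_λ(R). -/
open Real

/-- Generalized sine `s_λ` for curvature `L`. -/
noncomputable def slam (L t : ℝ) : ℝ :=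
  if 0 < L then Real.sin (Real.sqrt L * t) / Real.sqrt L
  else if L < 0 then Real.sinh (Real.sqrt (-L) * t) / Real.sqrt (-L)
  else t

/-- Generalized cosine `c_λ` for curvature `L`. -/
noncomputable def clam (L t : ℝ) : ℝ :=
  if 0 < L then Real.cos (Real.sqrt L * t)
  else if L < 0 then Real.cosh (Real.sqrt (-L) * t)
  else 1

/-- Generalized tangent `ta_λ`. -/
noncomputable def talam (L t : ℝ) : ℝ := slam L t / clam L t

/-- Generalized cotangent `co_λ`. -/
noncomputable def colam (L t : ℝ) : ℝ := clam L t / slam L t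

lemma aux_sin_div : Filter.Tendsto (fun x : ℝ => x / Real.sin x)
    (nhdsWithin 0 {(0:ℝ)}ᶜ) (nhds 1) := by
  have h := Real.hasDerivAt_sin 0
  rw [hasDerivAt_iff_tendsto_slope] at h
  have h2 : Filter.Tendsto (fun x : ℝ => Real.sin x / x)
      (nhdsWithin 0 {(0:ℝ)}ᶜ) (nhds 1) := by
    rw [Real.cos_zero] at h
    refine h.congr fun x => ?_
    simp [slope_def_field, div_eq_div_iff]
  have h3 := h2.inv₀ one_ne_zero
  simpa [inv_div] using h3

open Filter in
/-- The discrete curvatures of inscribed regular polygons converge to the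
curvature `co_λ(R)` of the circumscribing circle. -/
theorem stmt_5 (L R : ℝ) (hR : 0 < R) (hRL : 0 < L → R < π / (2 * Real.sqrt L))
    (B : ℕ → ℝ) (hB : ∀ n, 0 < B n ∧ B n < π)
    (hBlim : Tendsto B atTop (nhds π))
    (l : ℕ → ℝ) (hl : ∀ n, talam L (l n / 2) = talam L R * Real.cos (B n / 2)) :
    Tendsto (fun n => (π - B n) / (2 * talam L (l n / 2))) atTop (nhds (colam L R)) := by
  -- positivity of slam, clam at R
  have key : 0 < L → Real.sqrt L * R < π / 2 := by
    intro hL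
    have hs : 0 < Real.sqrt L := Real.sqrt_pos.mpr hL
    have := hRL hL
    calc Real.sqrt L * R < Real.sqrt L * (π / (2 * Real.sqrt L)) := by
          exact mul_lt_mul_of_pos_left this hs
      _ = π / 2 := by field_simp
  have hsR : 0 < slam L R := by
    unfold slam
    rcases lt_trichotomy 0 L with hL | hL | hL
    · rw [if_pos hL]
      have hs : 0 < Real.sqrt L := Real.sqrt_pos.mpr hL
      have h1 : 0 < Real.sqrt L * R := mul_pos hs hR
      have h2 : Real.sqrt L * R < π := (key hL).trans (by linarith [Real.pi_pos])
      exact div_pos (Real.sin_pos_of_pos_of_lt_pi h1 h2) hs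
    · simp [← hL, hR]
    · rw [if_neg (by linarith), if_pos hL]
      have hs : 0 < Real.sqrt (-L) := Real.sqrt_pos.mpr (by linarith)
      exact div_pos (Real.sinh_pos_iff.mpr (mul_pos hs hR)) hs
  have hcR : 0 < clam L R := by
    unfold clam
    rcases lt_trichotomy 0 L with hL | hL | hL
    · rw [if_pos hL]
      have hs : 0 < Real.sqrt L := Real.sqrt_pos.mpr hL
      exact Real.cos_pos_of_mem_Ioo ⟨by nlinarith [Real.pi_pos], key hL⟩
    · simp [← hL]
    · rw [if_neg (by linarith), if_pos hL]
      exact Real.cosh_pos _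
  have hta : 0 < talam L R := div_pos hsR hcR
  -- rewrite the sequence
  have heq : ∀ n, (π - B n) / (2 * talam L (l n / 2))
      = ((π - B n) / 2) / Real.sin ((π - B n) / 2) * colam L R := by
    intro n
    rw [hl n]
    have hcos : Real.cos (B n / 2) = Real.sin ((π - B n) / 2) := by
      rw [← Real.sin_pi_div_two_sub]; ring_nf
    rw [hcos]
    have hsin : 0 < Real.sin ((π - B n) / 2) := by
      apply Real.sin_pos_of_pos_of_lt_pi
      · linarith [(hB n).2]
      · nlinarith [(hB n).1, Real.pi_pos]
    unfold colam talam
    field_simp [hsin.ne', hsR.ne', hcR.ne']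
  simp only [heq]
  have hx : Tendsto (fun n => (π - B n) / 2) atTop (nhdsWithin 0 {(0:ℝ)}ᶜ) := by
    apply tendsto_nhdsWithin_of_tendsto_nhds_of_eventually_within
    · have : Tendsto (fun n => (π - B n) / 2) atTop (nhds ((π - π)/2)) :=
        (tendsto_const_nhds.sub hBlim).div_const 2
      simpa using this
    · filter_upwards with n
      have := (hB n).2
      simp only [Set.mem_compl_iff, Set.mem_singleton_iff]
      intro h
      have : π = B n := by linarith [div_eq_zero_iff.mp h]
      linarith
  have hmain : Tendsto (fun n => ((π - B n) / 2) / Real.sin ((π - B n) / 2))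
      atTop (nhds 1) := aux_sin_div.comp hx
  have := hmain.mul (tendsto_const_nhds (x := colam L R))
  simpa using this
end

section
/- Fix θ ∈ (0, π/2] and φ ∈ (−θ, θ). For ε > 0 define r_ε(φ) = r₀(ε) + a(ε)φ² + b(ε)φ⁴ where b(ε)/ε → −1/(8θ²), a(ε) = −2b(ε)θ², r₀(ε) = ε + b(ε)θ⁴ as ε → 0⁺. Then r_ε(φ)/ε → 1 − (θ² − φ²)²/(8θ²), r_ε'(φ)/ε → φ/2 − φ³/(2θ²), r_ε''(φ)/ε → 1/2 − 3φ²/(2θ²), and the limit function 1 − (θ² − φ²)²/(8θ²) is strictly positive for |φ| < θ. Consequently the curvature expression k_ε(φ) = s_λ(r_ε)·(r_ε'' + s_λ(r_ε)c_λ(r_ε) + 3 r_ε'² co_λ(r_ε))/(s_λ(r_ε)² + r_ε'²)^{3/2} tends to +∞ as ε → 0⁺. -/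
open Real

open Filter in
private lemma sin_div_self_tendsto :
    Tendsto (fun x : ℝ => Real.sin x / x) (nhdsWithin 0 {(0:ℝ)}ᶜ) (nhds 1) := by
  have h := (hasDerivAt_iff_tendsto_slope).mp (Real.hasDerivAt_sin 0)
  simp only [Real.cos_zero] at h
  refine h.congr' ?_
  filter_upwards [self_mem_nhdsWithin] with x hx
  simp [slope_def_field, div_eq_div_iff, sub_zero]

open Filter in
private lemma sinh_div_self_tendsto :
    Tendsto (fun x : ℝ => Real.sinh x / x) (nhdsWithin 0 {(0:ℝ)}ᶜ) (nhds 1) := by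
  have h := (hasDerivAt_iff_tendsto_slope).mp (Real.hasDerivAt_sinh 0)
  simp only [Real.cosh_zero] at h
  refine h.congr' ?_
  filter_upwards [self_mem_nhdsWithin] with x hx
  simp [slope_def_field, sub_zero]

open Filter in
private lemma mul_tendsto_punctured (m : ℝ) (hm : m ≠ 0) :
    Tendsto (fun t : ℝ => m * t) (nhdsWithin 0 {(0:ℝ)}ᶜ) (nhdsWithin 0 {(0:ℝ)}ᶜ) := by
  rw [tendsto_nhdsWithin_iff]
  constructor
  · have : Tendsto (fun t : ℝ => m * t) (nhds 0) (nhds (m * 0)) :=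
      (continuous_const.mul continuous_id).tendsto 0
    simpa using this.mono_left nhdsWithin_le_nhds
  · filter_upwards [self_mem_nhdsWithin] with t ht
    exact mul_ne_zero hm ht

open Filter in
private lemma slam_div_self_tendsto (L : ℝ) :
    Tendsto (fun t => slam L t / t) (nhdsWithin 0 {(0:ℝ)}ᶜ) (nhds 1) := by
  rcases lt_trichotomy 0 L with hL | hL | hL
  · have hs : Real.sqrt L ≠ 0 := by positivity
    have h := sin_div_self_tendsto.comp (mul_tendsto_punctured (Real.sqrt L) hs)
    refine h.congr ?_
    intro t
    simp only [Function.comp_apply, slam, if_pos hL]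
    rw [div_div]
  · refine tendsto_const_nhds.congr' ?_
    filter_upwards [self_mem_nhdsWithin] with t ht
    simp [slam, ← hL, div_self ht]
  · have hs : Real.sqrt (-L) ≠ 0 := by
      have : (0:ℝ) < -L := by linarith
      positivity
    have h := sinh_div_self_tendsto.comp (mul_tendsto_punctured (Real.sqrt (-L)) hs)
    refine h.congr ?_
    intro t
    simp only [Function.comp_apply, slam, if_neg (by linarith : ¬ 0 < L), if_pos hL]
    rw [div_div]

open Filter in
private lemma clam_tendsto_one (L : ℝ) :
    Tendsto (fun t => clam L t) (nhds 0) (nhds 1) := by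
  rcases lt_trichotomy 0 L with hL | hL | hL
  · have hco : Continuous fun t : ℝ => Real.cos (Real.sqrt L * t) := by fun_prop
    have h : Tendsto (fun t : ℝ => Real.cos (Real.sqrt L * t)) (nhds 0) (nhds 1) := by
      simpa using hco.tendsto 0
    refine h.congr fun t => ?_
    simp [clam, if_pos hL]
  · simpa [clam, ← hL] using (tendsto_const_nhds : Tendsto (fun _ : ℝ => (1:ℝ)) (nhds 0) (nhds 1))
  · have hco : Continuous fun t : ℝ => Real.cosh (Real.sqrt (-L) * t) := by fun_prop
    have h : Tendsto (fun t : ℝ => Real.cosh (Real.sqrt (-L) * t)) (nhds 0) (nhds 1) := by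
      simpa using hco.tendsto 0
    refine h.congr fun t => ?_
    simp [clam, if_neg (by linarith : ¬ 0 < L), if_pos hL]

private lemma key_ts (t s : ℝ) (hs : 0 < s) (hst : s ≤ t) (ht : t < 8) :
    0 < 96*t*s + 40*t*s^2 - 60*s^3 + s^4 := by
  nlinarith [mul_nonneg (mul_nonneg hs.le hs.le) (sub_nonneg.mpr hst),
    mul_nonneg hs.le (sub_nonneg.mpr hst),
    mul_pos (mul_pos (mul_pos hs hs) (by linarith : (0:ℝ) < 8 - s)) (by linarith : (0:ℝ) < 12 - s)]

set_option maxHeartbeats 2000000 in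
open Filter in
/-- Appendix asymptotics: for the quartic rounding functions
`r_ε(φ) = r₀(ε) + a(ε)φ² + b(ε)φ⁴` with `b(ε)/ε → -1/(8θ²)`, `a(ε) = -2b(ε)θ²`,
`r₀(ε) = ε + b(ε)θ⁴`, one has `r_ε/ε`, `r_ε'/ε`, `r_ε''/ε` converging to the
stated limits, the limit of `r_ε/ε` is positive for `|φ| < θ`, and the curvature
expression `k_ε(φ)` tends to `+∞` as `ε → 0⁺`. -/
theorem stmt_19 (L θ φ : ℝ) (hθ : 0 < θ) (hθ' : θ ≤ π / 2)
    (hφ : -θ < φ) (hφ' : φ < θ)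
    (b a r₀ : ℝ → ℝ)
    (hb : Tendsto (fun ε => b ε / ε) (nhdsWithin 0 (Set.Ioi 0))
      (nhds (-1 / (8 * θ ^ 2))))
    (ha : ∀ ε, a ε = -2 * b ε * θ ^ 2)
    (hr₀ : ∀ ε, r₀ ε = ε + b ε * θ ^ 4) :
    letI r : ℝ → ℝ := fun ε => r₀ ε + a ε * φ ^ 2 + b ε * φ ^ 4
    letI rp : ℝ → ℝ := fun ε => 2 * a ε * φ + 4 * b ε * φ ^ 3
    letI rpp : ℝ → ℝ := fun ε => 2 * a ε + 12 * b ε * φ ^ 2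
    letI k : ℝ → ℝ := fun ε =>
      slam L (r ε) * (rpp ε + slam L (r ε) * clam L (r ε) + 3 * rp ε ^ 2 * colam L (r ε))
        / ((slam L (r ε)) ^ 2 + rp ε ^ 2) ^ ((3 : ℝ) / 2)
    Tendsto (fun ε => r ε / ε) (nhdsWithin 0 (Set.Ioi 0))
        (nhds (1 - (θ ^ 2 - φ ^ 2) ^ 2 / (8 * θ ^ 2))) ∧
      Tendsto (fun ε => rp ε / ε) (nhdsWithin 0 (Set.Ioi 0))
        (nhds (φ / 2 - φ ^ 3 / (2 * θ ^ 2))) ∧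
      Tendsto (fun ε => rpp ε / ε) (nhdsWithin 0 (Set.Ioi 0))
        (nhds (1 / 2 - 3 * φ ^ 2 / (2 * θ ^ 2))) ∧
      0 < 1 - (θ ^ 2 - φ ^ 2) ^ 2 / (8 * θ ^ 2) ∧
      Tendsto k (nhdsWithin 0 (Set.Ioi 0)) atTop := by
  have hπ : Real.pi < 3.15 := Real.pi_lt_d2
  have hθ8 : θ ^ 2 < 8 := by nlinarith
  have hu : φ ^ 2 < θ ^ 2 := by nlinarith
  set l := nhdsWithin (0:ℝ) (Set.Ioi 0) with hl
  set c : ℝ := 1 - (θ ^ 2 - φ ^ 2) ^ 2 / (8 * θ ^ 2) with hc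
  set e : ℝ := φ / 2 - φ ^ 3 / (2 * θ ^ 2) with he
  set d : ℝ := 1 / 2 - 3 * φ ^ 2 / (2 * θ ^ 2) with hd
  have hθ0 : (θ:ℝ) ^ 2 ≠ 0 := by positivity
  have heps : ∀ᶠ ε in l, (0:ℝ) < ε := self_mem_nhdsWithin
  -- limit of r/ε
  have h1 : Tendsto (fun ε => (r₀ ε + a ε * φ ^ 2 + b ε * φ ^ 4) / ε) l (nhds c) := by
    have base : Tendsto (fun ε => 1 + (b ε / ε) * (θ ^ 2 - φ ^ 2) ^ 2) l
        (nhds (1 + (-1 / (8 * θ ^ 2)) * (θ ^ 2 - φ ^ 2) ^ 2)) :=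
      tendsto_const_nhds.add (hb.mul_const _)
    have hval : (1 + (-1 / (8 * θ ^ 2)) * (θ ^ 2 - φ ^ 2) ^ 2) = c := by
      rw [hc]; field_simp; ring
    rw [← hval]
    refine base.congr' ?_
    filter_upwards [heps] with ε hε
    rw [ha, hr₀]
    field_simp
    ring
  -- limit of rp/ε
  have h2 : Tendsto (fun ε => (2 * a ε * φ + 4 * b ε * φ ^ 3) / ε) l (nhds e) := by
    have base : Tendsto (fun ε => (b ε / ε) * (4 * φ ^ 3 - 4 * θ ^ 2 * φ)) l
        (nhds ((-1 / (8 * θ ^ 2)) * (4 * φ ^ 3 - 4 * θ ^ 2 * φ))) := hb.mul_const _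
    have hval : ((-1 / (8 * θ ^ 2)) * (4 * φ ^ 3 - 4 * θ ^ 2 * φ)) = e := by
      rw [he]; field_simp; ring
    rw [← hval]
    refine base.congr' ?_
    filter_upwards [heps] with ε hε
    rw [ha]
    field_simp
    ring
  -- limit of rpp/ε
  have h3 : Tendsto (fun ε => (2 * a ε + 12 * b ε * φ ^ 2) / ε) l (nhds d) := by
    have base : Tendsto (fun ε => (b ε / ε) * (12 * φ ^ 2 - 4 * θ ^ 2)) l
        (nhds ((-1 / (8 * θ ^ 2)) * (12 * φ ^ 2 - 4 * θ ^ 2))) := hb.mul_const _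
    have hval : ((-1 / (8 * θ ^ 2)) * (12 * φ ^ 2 - 4 * θ ^ 2)) = d := by
      rw [hd]; field_simp; ring
    rw [← hval]
    refine base.congr' ?_
    filter_upwards [heps] with ε hε
    rw [ha]
    field_simp
    ring
  -- positivity of c
  have hcpos : 0 < c := by
    rw [hc]
    rw [sub_pos, div_lt_one (by positivity : (0:ℝ) < 8 * θ ^ 2)]
    nlinarith
  -- positivity of N
  have hN : 0 < c * d + c ^ 2 + 3 * e ^ 2 := by
    have hkey := key_ts (θ ^ 2) (θ ^ 2 - φ ^ 2) (by linarith) (by nlinarith) hθ8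
    have hident : 64 * θ ^ 4 * (c * d + c ^ 2 + 3 * e ^ 2)
        = (96 * θ ^ 2 * (θ ^ 2 - φ ^ 2) + 40 * θ ^ 2 * (θ ^ 2 - φ ^ 2) ^ 2
          - 60 * (θ ^ 2 - φ ^ 2) ^ 3 + (θ ^ 2 - φ ^ 2) ^ 4) := by
      rw [hc, hd, he]; field_simp; ring
    nlinarith [hident, hkey, sq_nonneg (θ ^ 2)]
  clear_value c d e
  refine ⟨h1, h2, h3, hcpos, ?_⟩
  -- now the curvature limit
  set r : ℝ → ℝ := fun ε => r₀ ε + a ε * φ ^ 2 + b ε * φ ^ 4 with hrdef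
  set rp : ℝ → ℝ := fun ε => 2 * a ε * φ + 4 * b ε * φ ^ 3 with hrpdef
  set rpp : ℝ → ℝ := fun ε => 2 * a ε + 12 * b ε * φ ^ 2 with hrppdef
  have hr0 : Tendsto r l (nhds 0) := by
    have : Tendsto (fun ε => (r ε / ε) * ε) l (nhds (c * 0)) :=
      h1.mul (tendsto_id.mono_left nhdsWithin_le_nhds)
    rw [mul_zero] at this
    refine this.congr' ?_
    filter_upwards [heps] with ε hε
    field_simp
  have hrposev : ∀ᶠ ε in l, 0 < r ε := by
    have := h1.eventually (eventually_gt_nhds hcpos |>.mono (fun x hx => hx))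
    filter_upwards [this, heps] with ε h hε
    have := mul_pos h hε
    rwa [div_mul_cancel₀ _ (ne_of_gt hε)] at this
  have hrpunct : Tendsto r l (nhdsWithin 0 {(0:ℝ)}ᶜ) := by
    rw [tendsto_nhdsWithin_iff]
    exact ⟨hr0, hrposev.mono fun ε h => ne_of_gt h⟩
  -- slam(r ε)/ε → c
  have hA : Tendsto (fun ε => slam L (r ε) / ε) l (nhds c) := by
    have comp := (slam_div_self_tendsto L).comp hrpunct
    have : Tendsto (fun ε => (slam L (r ε) / r ε) * (r ε / ε)) l (nhds (1 * c)) :=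
      comp.mul h1
    rw [one_mul] at this
    refine this.congr' ?_
    filter_upwards [hrposev, heps] with ε hr hε
    field_simp
  have hclam : Tendsto (fun ε => clam L (r ε)) l (nhds 1) :=
    (clam_tendsto_one L).comp hr0
  have hApos : ∀ᶠ ε in l, 0 < slam L (r ε) := by
    have hev := hA.eventually (eventually_gt_nhds hcpos)
    filter_upwards [hev, heps] with ε h hε
    have := mul_pos h hε
    rwa [div_mul_cancel₀ _ (ne_of_gt hε)] at this
  -- B
  have hB : Tendsto (fun ε => (rpp ε / ε) + (slam L (r ε) / ε) * clam L (r ε)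
      + 3 * (rp ε / ε) ^ 2 * (clam L (r ε) / (slam L (r ε) / ε))) l
      (nhds (d + c * 1 + 3 * e ^ 2 * (1 / c))) :=
    (h3.add (hA.mul hclam)).add
      (((tendsto_const_nhds.mul (h2.pow 2))).mul (hclam.div hA (ne_of_gt hcpos)))
  have hce : (0:ℝ) < c ^ 2 + e ^ 2 :=
    add_pos_of_pos_of_nonneg (pow_pos hcpos 2) (sq_nonneg e)
  have hD : Tendsto (fun ε => ((slam L (r ε) / ε) ^ 2 + (rp ε / ε) ^ 2) ^ ((3:ℝ)/2)) l
      (nhds ((c ^ 2 + e ^ 2) ^ ((3:ℝ)/2))) := by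
    have hcont := Real.continuousAt_rpow_const (c ^ 2 + e ^ 2) ((3:ℝ)/2) (Or.inl (ne_of_gt hce))
    exact hcont.tendsto.comp ((hA.pow 2).add (h2.pow 2))
  set K : ℝ := c * (d + c * 1 + 3 * e ^ 2 * (1 / c)) / (c ^ 2 + e ^ 2) ^ ((3:ℝ)/2) with hK
  have hKpos : 0 < K := by
    have hnum : c * (d + c * 1 + 3 * e ^ 2 * (1 / c)) = c * d + c ^ 2 + 3 * e ^ 2 := by
      field_simp
    rw [hK, hnum]
    exact div_pos hN (Real.rpow_pos_of_pos hce _)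
  have hq : Tendsto (fun ε => (slam L (r ε) / ε) *
      ((rpp ε / ε) + (slam L (r ε) / ε) * clam L (r ε)
        + 3 * (rp ε / ε) ^ 2 * (clam L (r ε) / (slam L (r ε) / ε)))
      / ((slam L (r ε) / ε) ^ 2 + (rp ε / ε) ^ 2) ^ ((3:ℝ)/2)) l (nhds K) :=
    (hA.mul hB).div hD (ne_of_gt (Real.rpow_pos_of_pos hce _))
  have hinv : Tendsto (fun ε : ℝ => ε⁻¹) l atTop := tendsto_inv_nhdsGT_zero
  have main := hinv.atTop_mul_pos hKpos hq
  refine main.congr' ?_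
  filter_upwards [heps, hApos, hrposev] with ε hε hS hr
  set S := slam L (r ε) with hSdef
  set C := clam L (r ε) with hCdef
  set P := rp ε with hPdef
  set Q := rpp ε with hQdef
  have hSP : (0:ℝ) < S ^ 2 + P ^ 2 := by positivity
  have hsplit : ((S / ε) ^ 2 + (P / ε) ^ 2) = (S ^ 2 + P ^ 2) / ε ^ 2 := by
    field_simp
  have hpow : ((S ^ 2 + P ^ 2) / ε ^ 2) ^ ((3:ℝ)/2)
      = (S ^ 2 + P ^ 2) ^ ((3:ℝ)/2) / ε ^ 3 := by
    rw [Real.div_rpow hSP.le (by positivity)]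
    congr 1
    rw [← Real.rpow_natCast ε 2, ← Real.rpow_mul hε.le, ← Real.rpow_natCast ε 3]
    norm_num
  have hT : (0:ℝ) < (S ^ 2 + P ^ 2) ^ ((3:ℝ)/2) := Real.rpow_pos_of_pos hSP _
  show ε⁻¹ * _ = S * (Q + S * C + 3 * P ^ 2 * colam L (r ε)) / (S ^ 2 + P ^ 2) ^ ((3:ℝ)/2)
  rw [colam, ← hSdef, ← hCdef]
  rw [hsplit, hpow]
  field_simp
end
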